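/- Co-support detection success: Let γ̂ = γ + e, let Λᶜ index rows of a matrix A (unit-norm rows, pairwise coherence ≤ μ_R) with aᵢᵀγ = 0 for i ∈ Λᶜ (|Λᶜ| = p remaining co-support rows), and let Λ index rows with |aᵢᵀγ| ≥ γ_min. If ‖e‖₂ ≤ γ_min · (1 + (1 + μ_R(p−1))/√p)⁻¹, then min over i ∈ Λᶜ of |aᵢᵀγ̂| < min over i ∈ Λ of |aᵢᵀγ̂|, so the row of minimal absolute correlation with γ̂ belongs to the co-support. -/
import Mathlib

open Finset

private lemma sumsq_dot_bound {N n : ℕ} (A : Matrix (Fin N) (Fin n) ℝ)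
    (hrows : ∀ i, ∑ t, (A i t) ^ 2 = 1) (μ : ℝ) (hμ : 0 ≤ μ)
    (hcoh : ∀ i j : Fin N, i ≠ j → |∑ t, A i t * A j t| ≤ μ)
    (S : Finset (Fin N)) (hS : S.Nonempty) (e : Fin n → ℝ) :
    ∑ i ∈ S, (∑ t, A i t * e t) ^ 2
      ≤ (1 + μ * ((S.card : ℝ) - 1)) * ∑ t, (e t) ^ 2 := by
  classical
  set v : Fin N → ℝ := fun i => ∑ t, A i t * e t with hv
  set Q : ℝ := ∑ i ∈ S, v i ^ 2 with hQdef
  have hQ0 : 0 ≤ Q := Finset.sum_nonneg fun i _ => sq_nonneg _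
  set E : ℝ := ∑ t, (e t) ^ 2 with hEdef
  have hE0 : 0 ≤ E := Finset.sum_nonneg fun t _ => sq_nonneg _
  set w : Fin n → ℝ := fun t => ∑ i ∈ S, v i * A i t with hw
  -- key1 : ∑ t, w t * e t = Q
  have key1 : ∑ t, w t * e t = Q := by
    calc ∑ t, w t * e t = ∑ t, ∑ i ∈ S, v i * (A i t * e t) := by
          refine Finset.sum_congr rfl fun t _ => ?_
          rw [hw, Finset.sum_mul]
          exact Finset.sum_congr rfl fun i _ => by ring
      _ = ∑ i ∈ S, ∑ t, v i * (A i t * e t) := Finset.sum_comm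
      _ = ∑ i ∈ S, v i * ∑ t, A i t * e t := by
          refine Finset.sum_congr rfl fun i _ => ?_
          rw [Finset.mul_sum]
      _ = Q := by
          rw [hQdef]
          exact Finset.sum_congr rfl fun i _ => by rw [hv]; ring
  -- expansion of ∑ t, w t ^ 2
  have expand : ∑ t, w t ^ 2
      = ∑ i ∈ S, ∑ j ∈ S, v i * v j * ∑ t, A i t * A j t := by
    calc ∑ t, w t ^ 2
        = ∑ t, ∑ i ∈ S, ∑ j ∈ S, (v i * A i t) * (v j * A j t) := by
          refine Finset.sum_congr rfl fun t _ => ?_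
          rw [hw, sq, Finset.sum_mul_sum]
      _ = ∑ i ∈ S, ∑ t, ∑ j ∈ S, (v i * A i t) * (v j * A j t) := Finset.sum_comm
      _ = ∑ i ∈ S, ∑ j ∈ S, ∑ t, (v i * A i t) * (v j * A j t) := by
          exact Finset.sum_congr rfl fun i _ => Finset.sum_comm
      _ = ∑ i ∈ S, ∑ j ∈ S, v i * v j * ∑ t, A i t * A j t := by
          refine Finset.sum_congr rfl fun i _ => Finset.sum_congr rfl fun j _ => ?_
          rw [Finset.mul_sum]
          exact Finset.sum_congr rfl fun t _ => by ring
  set T : ℝ := ∑ i ∈ S, |v i| with hT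
  have hTsq : T ^ 2 ≤ (S.card : ℝ) * Q := by
    have h := sq_sum_le_card_mul_sum_sq (s := S) (f := fun i => |v i|)
    simpa [hT, hQdef, sq_abs] using h
  -- bound ∑ t, w t ^ 2
  have wbound : ∑ t, w t ^ 2 ≤ Q + μ * (T ^ 2 - Q) := by
    rw [expand]
    have hinner : ∀ i ∈ S, ∑ j ∈ S, v i * v j * ∑ t, A i t * A j t
        ≤ v i ^ 2 + μ * (|v i| * (T - |v i|)) := by
      intro i hi
      have hsplit : ∑ j ∈ S, v i * v j * ∑ t, A i t * A j t
          = (∑ j ∈ S.erase i, v i * v j * ∑ t, A i t * A j t)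
            + v i * v i * ∑ t, A i t * A i t := by
        rw [Finset.sum_erase_add _ _ hi]
      rw [hsplit]
      have hdiag : v i * v i * ∑ t, A i t * A i t = v i ^ 2 := by
        have : ∑ t, A i t * A i t = 1 := by
          have := hrows i
          simpa [sq] using this
        rw [this]; ring
      have hoff : ∑ j ∈ S.erase i, v i * v j * ∑ t, A i t * A j t
          ≤ μ * (|v i| * (T - |v i|)) := by
        have h1 : ∀ j ∈ S.erase i, v i * v j * ∑ t, A i t * A j t
            ≤ μ * (|v i| * |v j|) := by
          intro j hj
          have hij : i ≠ j := fun h => (Finset.ne_of_mem_erase hj) h.symm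
          have hcij := hcoh i j hij
          calc v i * v j * ∑ t, A i t * A j t
              ≤ |v i * v j * ∑ t, A i t * A j t| := le_abs_self _
            _ = |v i| * |v j| * |∑ t, A i t * A j t| := by
                rw [abs_mul, abs_mul]
            _ ≤ |v i| * |v j| * μ := by
                exact mul_le_mul_of_nonneg_left hcij
                  (mul_nonneg (abs_nonneg _) (abs_nonneg _))
            _ = μ * (|v i| * |v j|) := by ring
        calc ∑ j ∈ S.erase i, v i * v j * ∑ t, A i t * A j t
            ≤ ∑ j ∈ S.erase i, μ * (|v i| * |v j|) := Finset.sum_le_sum h1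
          _ = μ * (|v i| * ∑ j ∈ S.erase i, |v j|) := by
              rw [Finset.mul_sum, Finset.mul_sum]
          _ = μ * (|v i| * (T - |v i|)) := by
              congr 2
              have := Finset.sum_erase_add S (fun j => |v j|) hi
              rw [hT]; linarith
      linarith
    calc ∑ i ∈ S, ∑ j ∈ S, v i * v j * ∑ t, A i t * A j t
        ≤ ∑ i ∈ S, (v i ^ 2 + μ * (|v i| * (T - |v i|))) := Finset.sum_le_sum hinner
      _ = Q + μ * (T * T - Q) := by
          rw [Finset.sum_add_distrib, hQdef]
          congr 1
          rw [← Finset.mul_sum]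
          congr 1
          have : ∑ i ∈ S, (|v i| * (T - |v i|)) = (∑ i ∈ S, |v i| * T) - ∑ i ∈ S, |v i| ^ 2 := by
            rw [← Finset.sum_sub_distrib]
            exact Finset.sum_congr rfl fun i _ => by ring
          rw [this]
          have h1 : ∑ i ∈ S, |v i| * T = T * T := by
            rw [← Finset.sum_mul, ← hT]
          have h2 : ∑ i ∈ S, |v i| ^ 2 = Q := by
            rw [hQdef]; exact Finset.sum_congr rfl fun i _ => sq_abs _
          rw [h1, h2]
      _ = Q + μ * (T ^ 2 - Q) := by ring
  have wbound2 : ∑ t, w t ^ 2 ≤ (1 + μ * ((S.card : ℝ) - 1)) * Q := by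
    have : μ * (T ^ 2 - Q) ≤ μ * ((S.card : ℝ) * Q - Q) := by
      apply mul_le_mul_of_nonneg_left _ hμ
      linarith
    calc ∑ t, w t ^ 2 ≤ Q + μ * (T ^ 2 - Q) := wbound
      _ ≤ Q + μ * ((S.card : ℝ) * Q - Q) := by linarith
      _ = (1 + μ * ((S.card : ℝ) - 1)) * Q := by ring
  -- Cauchy-Schwarz
  have hw0 : 0 ≤ ∑ t, w t ^ 2 := Finset.sum_nonneg fun t _ => sq_nonneg _
  have hcs : Q ^ 2 ≤ (∑ t, w t ^ 2) * E := by
    rw [← key1, hEdef]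
    exact sum_mul_sq_le_sq_mul_sq _ _ _
  have hcard1 : (1:ℝ) ≤ (S.card : ℝ) := by
    have := Finset.card_pos.mpr hS
    exact_mod_cast this
  have hcoef : (0:ℝ) ≤ 1 + μ * ((S.card : ℝ) - 1) := by nlinarith
  rcases eq_or_lt_of_le hQ0 with hQz | hQpos
  · rw [← hQz]
    exact mul_nonneg hcoef hE0
  · have h2 : Q ^ 2 ≤ (1 + μ * ((S.card : ℝ) - 1)) * Q * E :=
      le_trans hcs (mul_le_mul_of_nonneg_right wbound2 hE0)
    nlinarith

set_option maxHeartbeats 1000000 in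
/-- Co-support detection success (Lemma 7.2): if the noise is small enough,
‖e‖₂ ≤ γ_min(1 + (1 + μ_R(p−1))/√p)⁻¹, then the row of minimal absolute
correlation with γ̂ = γ + e belongs to the co-support Λᶜ. -/
theorem stmt15 {N n : ℕ} (A : Matrix (Fin N) (Fin n) ℝ)
    (hrows : ∀ i, ∑ t, (A i t) ^ 2 = 1) (μR : ℝ) (hμR : 0 ≤ μR)
    (hcoh : ∀ i j : Fin N, i ≠ j → |∑ t, A i t * A j t| ≤ μR)
    (Λc Λ : Finset (Fin N)) (p : ℕ) (hp : 0 < p) (hcard : Λc.card = p)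
    (γ e γhat : Fin n → ℝ) (hhat : γhat = γ + e)
    (γmin : ℝ) (hγmin : 0 < γmin)
    (hzero : ∀ i ∈ Λc, A.mulVec γ i = 0)
    (hsupp : ∀ i ∈ Λ, γmin ≤ |A.mulVec γ i|)
    (hnoise : Real.sqrt (∑ t, (e t) ^ 2)
      ≤ γmin * (1 + (1 + μR * ((p : ℝ) - 1)) / Real.sqrt p)⁻¹) :
    ∃ i ∈ Λc, ∀ j ∈ Λ, |A.mulVec γhat i| < |A.mulVec γhat j| := by
  classical
  subst hhat
  have hmv : ∀ (x : Fin n → ℝ) (i : Fin N), A.mulVec x i = ∑ t, A i t * x t := by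
    intro x i; rfl
  set v : Fin N → ℝ := fun i => ∑ t, A i t * e t with hv
  set E : ℝ := ∑ t, (e t) ^ 2 with hEdef
  have hE0 : 0 ≤ E := Finset.sum_nonneg fun t _ => sq_nonneg _
  set nrm : ℝ := Real.sqrt E with hnrm
  have hnrm0 : 0 ≤ nrm := Real.sqrt_nonneg _
  have hnrmsq : nrm ^ 2 = E := Real.sq_sqrt hE0
  set c : ℝ := μR * ((p : ℝ) - 1) with hc
  have hp1 : (1:ℝ) ≤ (p : ℝ) := by exact_mod_cast hp
  have hc0 : 0 ≤ c := mul_nonneg hμR (by linarith)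
  have hsp0 : (0:ℝ) < Real.sqrt p := Real.sqrt_pos.mpr (by linarith)
  have hsp1 : (1:ℝ) ≤ Real.sqrt p := Real.one_le_sqrt.mpr hp1
  have hspsq : Real.sqrt p * Real.sqrt p = (p:ℝ) := Real.mul_self_sqrt (by linarith)
  have hsple : Real.sqrt p ≤ (p:ℝ) := by
    calc Real.sqrt p = 1 * Real.sqrt p := (one_mul _).symm
      _ ≤ Real.sqrt p * Real.sqrt p := mul_le_mul_of_nonneg_right hsp1 hsp0.le
      _ = (p:ℝ) := hspsq
  set K : ℝ := 1 + (1 + c) / Real.sqrt p with hK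
  have hKfrac : 0 ≤ (1 + c) / Real.sqrt p := div_nonneg (by linarith) (le_of_lt hsp0)
  have hK0 : 0 < K := by rw [hK]; linarith
  -- noise condition in product form
  have hnK : nrm * K ≤ γmin := by
    have h := mul_le_mul_of_nonneg_right hnoise (le_of_lt hK0)
    have h2 : γmin * K⁻¹ * K = γmin := by field_simp
    rw [h2] at h
    exact h
  -- Cauchy–Schwarz per row
  have hcs_row : ∀ i : Fin N, |v i| ≤ nrm := by
    intro i
    have h1 : (v i) ^ 2 ≤ 1 * E := by
      have h := sum_mul_sq_le_sq_mul_sq Finset.univ (fun t => A i t) e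
      rw [hrows i] at h
      exact h
    rw [one_mul] at h1
    have h2 := Real.sqrt_le_sqrt h1
    rwa [Real.sqrt_sq_eq_abs] at h2
  -- pick the minimizer over Λc
  have hΛcne : Λc.Nonempty := Finset.card_pos.mp (hcard ▸ hp)
  obtain ⟨i0, hi0, hmin⟩ := Λc.exists_min_image (fun i => |v i|) hΛcne
  set m : ℝ := |v i0| with hm
  have hm0 : 0 ≤ m := abs_nonneg _
  -- bound on m via the sum-of-squares lemma
  have hQbound : ∑ i ∈ Λc, v i ^ 2 ≤ (1 + c) * E := by
    have h := sumsq_dot_bound A hrows μR hμR hcoh Λc hΛcne e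
    rw [hcard] at h
    exact h
  have hmsum : (p : ℝ) * m ^ 2 ≤ ∑ i ∈ Λc, v i ^ 2 := by
    have h1 : ∀ i ∈ Λc, m ^ 2 ≤ v i ^ 2 := by
      intro i hi
      have h2 : m ≤ |v i| := hmin i hi
      calc m ^ 2 ≤ |v i| ^ 2 := pow_le_pow_left₀ hm0 h2 2
        _ = v i ^ 2 := sq_abs _
    have h2 := Finset.sum_le_sum h1
    rwa [Finset.sum_const, hcard, nsmul_eq_mul] at h2
  set R : ℝ := (1 + c) / Real.sqrt p * nrm with hR
  have hR0 : 0 ≤ R := mul_nonneg hKfrac hnrm0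
  have hmB : m ≤ R := by
    have hRsq : R ^ 2 * p = (1 + c) ^ 2 * E := by
      rw [hR, mul_pow, div_pow, hnrmsq]
      rw [Real.sq_sqrt (by linarith : (0:ℝ) ≤ (p:ℝ))]
      field_simp
    have hmsq : m ^ 2 * p ≤ R ^ 2 * p := by
      rw [hRsq]
      have h4 : (1 + c) * E ≤ (1 + c) * ((1 + c) * E) :=
        le_mul_of_one_le_left (mul_nonneg (by linarith) hE0) (by linarith)
      have h5 : (1 + c) * ((1 + c) * E) = (1 + c) ^ 2 * E := by ring
      linarith
    have hple : (0:ℝ) < (p:ℝ) := by linarith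
    have hm2 : m ^ 2 ≤ R ^ 2 := le_of_mul_le_mul_right hmsq hple
    have h3 := Real.sqrt_le_sqrt hm2
    rwa [Real.sqrt_sq hm0, Real.sqrt_sq hR0] at h3
  refine ⟨i0, hi0, fun j hj => ?_⟩
  -- values of correlations
  have hval_i0 : A.mulVec (γ + e) i0 = v i0 := by
    rw [Matrix.mulVec_add, Pi.add_apply, hzero i0 hi0, zero_add]
    rfl
  have hval_j : A.mulVec (γ + e) j = A.mulVec γ j + v j := by
    rw [Matrix.mulVec_add, Pi.add_apply]
    rfl
  rw [hval_i0, hval_j, ← hm]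
  -- lower bound for row j
  have hj_lb : γmin - |v j| ≤ |A.mulVec γ j + v j| := by
    have h1 : |A.mulVec γ j| ≤ |A.mulVec γ j + v j| + |v j| := by
      have h2 := abs_add_le (A.mulVec γ j + v j) (-(v j))
      simpa using h2
    have h3 := hsupp j hj
    linarith
  suffices hkey : m + |v j| < γmin by linarith
  set tj : ℝ := |v j| with htjdef
  have htj : tj ≤ nrm := hcs_row j
  by_cases hcase : tj < nrm
  · -- generic case: strict Cauchy–Schwarz for row j
    have hKexp : nrm * K = nrm + R := by rw [hK, hR]; ring
    linarith
  · -- equality case: e is parallel to the j-th row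
    have htj' : tj = nrm := le_antisymm htj (not_lt.mp hcase)
    by_cases hE : E = 0
    · -- e = 0
      have he0 : ∀ t, e t = 0 := by
        intro t
        have h1 := (Finset.sum_eq_zero_iff_of_nonneg
          (fun t _ => sq_nonneg (e t))).mp (hEdef.symm.trans hE) t (Finset.mem_univ t)
        exact (pow_eq_zero_iff two_ne_zero).mp h1
      have hvj : v j = 0 := by
        rw [hv]
        simp only
        exact Finset.sum_eq_zero fun t _ => by rw [he0 t, mul_zero]
      have hvi : v i0 = 0 := by
        rw [hv]
        simp only
        exact Finset.sum_eq_zero fun t _ => by rw [he0 t, mul_zero]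
      rw [htjdef, hvj, hm, hvi]
      simpa using hγmin
    · have hEpos : 0 < E := lt_of_le_of_ne hE0 (Ne.symm hE)
      have hnpos : 0 < nrm := Real.sqrt_pos.mpr hEpos
      set s : ℝ := v j with hs
      have habs_s : |s| = nrm := htj'
      have hssq : s ^ 2 = E := by
        calc s ^ 2 = |s| ^ 2 := (sq_abs s).symm
          _ = nrm ^ 2 := by rw [habs_s]
          _ = E := hnrmsq
      have hrowj : ∑ t, (A j t) ^ 2 = 1 := hrows j
      have hdots : ∑ t, A j t * e t = s := rfl
      have hexp : ∑ t, (e t - s * A j t) ^ 2 = 0 := by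
        have h1 : ∑ t, (e t - s * A j t) ^ 2
            = E - 2 * s * (∑ t, A j t * e t) + s ^ 2 * ∑ t, (A j t) ^ 2 := by
          calc ∑ t, (e t - s * A j t) ^ 2
              = ∑ t, ((e t) ^ 2 - 2 * s * (A j t * e t) + s ^ 2 * (A j t) ^ 2) :=
                Finset.sum_congr rfl fun t _ => by ring
            _ = E - 2 * s * (∑ t, A j t * e t) + s ^ 2 * ∑ t, (A j t) ^ 2 := by
                rw [Finset.sum_add_distrib, Finset.sum_sub_distrib,
                  ← Finset.mul_sum, ← Finset.mul_sum, hEdef]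
        rw [h1, hrowj, hdots]
        linear_combination -hssq
      have hept : ∀ t, e t = s * A j t := by
        intro t
        have hz := (Finset.sum_eq_zero_iff_of_nonneg
          (fun t _ => sq_nonneg (e t - s * A j t))).mp hexp t (Finset.mem_univ t)
        have h2 := pow_eq_zero_iff (two_ne_zero) |>.mp hz
        linarith [sub_eq_zero.mp h2]
      have hne : i0 ≠ j := by
        intro h
        have h1 := hzero i0 hi0
        have h2 := hsupp j hj
        rw [← h, h1] at h2
        simp at h2
        linarith
      set ρ : ℝ := ∑ t, A i0 t * A j t with hρ
      have hvio : v i0 = s * ρ := by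
        calc v i0 = ∑ t, A i0 t * e t := rfl
          _ = ∑ t, s * (A i0 t * A j t) := Finset.sum_congr rfl fun t _ => by
              rw [hept t]; ring
          _ = s * ρ := by rw [← Finset.mul_sum]
      have hm_eq : m = nrm * |ρ| := by rw [hm, hvio, abs_mul, habs_s]
      have hρμ : |ρ| ≤ μR := hcoh i0 j hne
      have hρ1 : |ρ| < 1 := by
        rcases lt_or_ge (|ρ|) 1 with h | h
        · exact h
        · exfalso
          have hρle : ρ ^ 2 ≤ 1 := by
            have hcs := sum_mul_sq_le_sq_mul_sq Finset.univ (fun t => A i0 t) (fun t => A j t)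
            rw [hrows i0, hrows j] at hcs
            simpa using hcs
          have hρsq : ρ ^ 2 = 1 := by
            refine le_antisymm hρle ?_
            calc (1:ℝ) = 1 * 1 := by norm_num
              _ ≤ |ρ| * |ρ| := mul_le_mul h h zero_le_one (abs_nonneg ρ)
              _ = ρ ^ 2 := by rw [abs_mul_abs_self]; ring
          have hexp2 : ∑ t, (A i0 t - ρ * A j t) ^ 2 = 0 := by
            have h1 : ∑ t, (A i0 t - ρ * A j t) ^ 2
                = (∑ t, (A i0 t) ^ 2) - 2 * ρ * (∑ t, A i0 t * A j t)
                  + ρ ^ 2 * ∑ t, (A j t) ^ 2 := by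
              calc ∑ t, (A i0 t - ρ * A j t) ^ 2
                  = ∑ t, ((A i0 t) ^ 2 - 2 * ρ * (A i0 t * A j t) + ρ ^ 2 * (A j t) ^ 2) :=
                    Finset.sum_congr rfl fun t _ => by ring
                _ = _ := by
                    rw [Finset.sum_add_distrib, Finset.sum_sub_distrib,
                      ← Finset.mul_sum, ← Finset.mul_sum]
            rw [h1, hrows i0, hrows j, ← hρ]
            linear_combination -hρsq
          have hrow_eq : ∀ t, A i0 t = ρ * A j t := by
            intro t
            have hz := (Finset.sum_eq_zero_iff_of_nonneg
              (fun t _ => sq_nonneg (A i0 t - ρ * A j t))).mp hexp2 t (Finset.mem_univ t)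
            have h2 := pow_eq_zero_iff (two_ne_zero) |>.mp hz
            linarith [sub_eq_zero.mp h2]
          have hmveq : A.mulVec γ i0 = ρ * A.mulVec γ j := by
            rw [hmv, hmv, Finset.mul_sum]
            exact Finset.sum_congr rfl fun t _ => by rw [hrow_eq t]; ring
          have h1 := hzero i0 hi0
          rw [h1] at hmveq
          have hρne : ρ ≠ 0 := by
            intro h0
            rw [h0] at hρsq
            norm_num at hρsq
          have hγj : A.mulVec γ j = 0 := by
            rcases mul_eq_zero.mp hmveq.symm with h | h
            · exact absurd h hρne
            · exact h
          have h2 := hsupp j hj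
          rw [hγj] at h2
          simp at h2
          linarith
      have hρK : |ρ| < (1 + c) / Real.sqrt p := by
        rw [lt_div_iff₀ hsp0]
        have hce : c = μR * (p:ℝ) - μR := by rw [hc]; ring
        rcases lt_or_ge μR 1 with hμ1 | hμ1
        · have h1 : |ρ| * Real.sqrt p ≤ μR * Real.sqrt p :=
            mul_le_mul_of_nonneg_right hρμ hsp0.le
          have h2 : μR * Real.sqrt p ≤ μR * (p:ℝ) :=
            mul_le_mul_of_nonneg_left hsple hμR
          linarith
        · have h1 : |ρ| * Real.sqrt p < 1 * Real.sqrt p :=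
            mul_lt_mul_of_pos_right hρ1 hsp0
          have h3 : (p:ℝ) - 1 ≤ c := by
            rw [hc]; exact le_mul_of_one_le_left (by linarith) hμ1
          linarith
      have hsum_eq : m + tj = nrm * (1 + |ρ|) := by
        rw [hm_eq, htj']; ring
      have hlt : nrm * (1 + |ρ|) < nrm * K := by
        apply mul_lt_mul_of_pos_left _ hnpos
        rw [hK]
        linarith
      linarith
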